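/- Suppose Γ is a class of sets W with |W| = ω₁ ⊆ W and RP_Γ holds. Then for every regular θ ≥ ω₂ and every stationary S ⊆ [H_θ]^ω there are in fact stationarily many W ∈ [H_θ]^{ω₁} ∩ Γ such that S ∩ [W]^ω is stationary in [W]^ω. -/

import Mathlib

/-!
Common framework for formalizing "Chang's Conjecture and semiproperness of
nonreasonable posets" (Cox).

We work in the universe of ZFC sets provided by Mathlib's `ZFSet`.  "Models of
ZFC" (ground models, forcing extensions, inner models) are rendered as
transitive classes `V : Set ZFSet` that contain all ordinals, are closed under
the Gödel operations, are almost universal and satisfy choice (by Jech's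
criterion such a class is exactly a transitive proper-class model of ZFC).
All set-theoretic notions (cardinals ω₁, ω₂, ω₃, the sets H_θ, countability,
stationarity, etc.) are relativized to such a class `U`; the ambient universe
is the class `V0 = Set.univ`.

First-order elementarity `M ≺ (A, ∈, Δ)` is genuine model-theoretic
elementarity, via Mathlib's first-order logic library, for the language with
two binary relation symbols (membership and a predicate for a wellorder Δ).

Forcing-theoretic notions (semiproperness, properness, preservation of
stationary subsets of ω₁, "forcing that the ground-model [ω₂]^ω is
nonstationary") are rendered by their standard combinatorial characterizations
via maximal antichains (names for countable ordinals are coded by a maximal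
antichain together with an ordinal value attached to each of its elements),
and via generic filters over class models.
-/

namespace CCPaper

noncomputable section

open ZFSet

/-- A "class" of the ambient set-theoretic universe. -/
abbrev VClass := Set ZFSet

/-- The ambient universe, viewed as a class. -/
def V0 : VClass := Set.univ

/-- von Neumann ordinal. -/
def IsOrd (x : ZFSet) : Prop := x.IsOrdinal

/-- ordinal successor -/
def succZ (x : ZFSet) : ZFSet := insert x x

def IsLimitOrd (x : ZFSet) : Prop := IsOrd x ∧ x ≠ ∅ ∧ ∀ y ∈ x, succZ y ∈ x

/-- supremum of a set of ordinals -/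
def supZ (X : ZFSet) : ZFSet := ZFSet.sUnion X

/-- `g` is (the graph of) a function with domain `d`. -/
def IsFunGraph (g d : ZFSet) : Prop :=
  (∀ p ∈ g, ∃ a ∈ d, ∃ b : ZFSet, p = ZFSet.pair a b) ∧
  (∀ a ∈ d, ∃! b : ZFSet, ZFSet.pair a b ∈ g) ∧
  (∀ a b : ZFSet, ZFSet.pair a b ∈ g → a ∈ d)

def MapsInto (g X : ZFSet) : Prop := ∀ a b : ZFSet, ZFSet.pair a b ∈ g → b ∈ X

def IsInjGraph (g d X : ZFSet) : Prop :=
  IsFunGraph g d ∧ MapsInto g X ∧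
    ∀ a a' b : ZFSet, ZFSet.pair a b ∈ g → ZFSet.pair a' b ∈ g → a = a'

def IsBijGraph (g d X : ZFSet) : Prop :=
  IsInjGraph g d X ∧ ∀ b ∈ X, ∃ a : ZFSet, ZFSet.pair a b ∈ g

/-- `|x| ≤ |y|`, as computed in the class `U`. -/
def cardLE (U : VClass) (x y : ZFSet) : Prop := ∃ g ∈ U, IsInjGraph g x y

/-- `|x| < θ` for a cardinal `θ`, as computed in `U`. -/
def cardLT (U : VClass) (x θ : ZFSet) : Prop := ∃ α ∈ θ, cardLE U x α

def cardEq (U : VClass) (x y : ZFSet) : Prop := ∃ g ∈ U, IsBijGraph g x y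

def IsCtble (U : VClass) (x : ZFSet) : Prop := cardLE U x ZFSet.omega

def IsFin (x : ZFSet) : Prop := ∃ n ∈ ZFSet.omega, ∃ g : ZFSet, IsBijGraph g x n

/-- ω₁ as computed in the class `U` (the least non-`U`-countable ordinal). -/
def omega1 (U : VClass) : ZFSet :=
  Classical.epsilon fun α => IsOrd α ∧ ¬ IsCtble U α ∧ ∀ β ∈ α, IsCtble U β

/-- ω₂ as computed in `U`. -/
def omega2 (U : VClass) : ZFSet :=
  Classical.epsilon fun α =>
    IsOrd α ∧ ¬ cardLE U α (omega1 U) ∧ ∀ β ∈ α, cardLE U β (omega1 U)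

/-- ω₃ as computed in `U`. -/
def omega3 (U : VClass) : ZFSet :=
  Classical.epsilon fun α =>
    IsOrd α ∧ ¬ cardLE U α (omega2 U) ∧ ∀ β ∈ α, cardLE U β (omega2 U)

def IsCardinal (U : VClass) (κ : ZFSet) : Prop := IsOrd κ ∧ ∀ α ∈ κ, ¬ cardLE U κ α

/-- `x` is unbounded (cofinal) in the ordinal `δ`. -/
def Unbdd (x δ : ZFSet) : Prop := ∀ β ∈ δ, ∃ γ ∈ x, β ∈ γ

/-- `θ` is an uncountable regular cardinal, as computed in `U`. -/
def IsRegular (U : VClass) (θ : ZFSet) : Prop :=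
  IsCardinal U θ ∧ ZFSet.omega ∈ θ ∧
    ∀ x ∈ U, x ⊆ θ → Unbdd x θ → ¬ cardLT U x θ

/-- `H_θ`, the collection of sets of hereditary cardinality `< θ`, computed in `U`. -/
def Hset (U : VClass) (θ : ZFSet) : ZFSet :=
  Classical.epsilon fun H => ∀ x : ZFSet,
    x ∈ H ↔ (x ∈ U ∧ ∃ t ∈ U, x ⊆ t ∧ t.IsTransitive ∧ cardLT U t θ)

/-- `w` is (the set of pairs of) a strict wellordering of `A`. -/
def IsWO (w A : ZFSet) : Prop :=
  (∀ p ∈ w, ∃ a ∈ A, ∃ b ∈ A, p = ZFSet.pair a b) ∧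
  (∀ a ∈ A, ZFSet.pair a a ∉ w) ∧
  (∀ a ∈ A, ∀ b ∈ A, ∀ c ∈ A,
      ZFSet.pair a b ∈ w → ZFSet.pair b c ∈ w → ZFSet.pair a c ∈ w) ∧
  (∀ a ∈ A, ∀ b ∈ A, a ≠ b → (ZFSet.pair a b ∈ w ∨ ZFSet.pair b a ∈ w)) ∧
  (∀ x : ZFSet, x ⊆ A → x ≠ ∅ → ∃ m ∈ x, ∀ y ∈ x, ZFSet.pair y m ∉ w)

/-! ### First-order elementarity -/

/-- Two binary relation symbols: membership, and a symbol for a wellorder `Δ`. -/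
inductive Rel2 : ℕ → Type
  | mem : Rel2 2
  | delta : Rel2 2

/-- The language `{∈, Δ}`. -/
def Lst : FirstOrder.Language := ⟨fun _ => Empty, Rel2⟩

/-- The `Lst`-structure `(A, ∈, w)` on the members of the ZF-set `A`, where the
second binary relation is interpreted by `x Δ y ↔ (x, y) ∈ w`. -/
def zStruct (A w : ZFSet) : Lst.Structure {x : ZFSet // x ∈ A} where
  funMap := fun {_} f _ => f.elim
  RelMap := fun {n} r =>
    match n, r with
    | _, Rel2.mem => fun v =>
        ((v 0 : {x : ZFSet // x ∈ A}) : ZFSet) ∈ ((v 1 : {x : ZFSet // x ∈ A}) : ZFSet)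
    | _, Rel2.delta => fun v =>
        ZFSet.pair ((v 0 : {x : ZFSet // x ∈ A}) : ZFSet)
          ((v 1 : {x : ZFSet // x ∈ A}) : ZFSet) ∈ w

/-- `M ≺ (A, ∈, w)`:  `M ⊆ A` and `M` is a (fully) elementary substructure of
`A` with respect to membership and the relation coded by `w`. -/
def Prec (M A w : ZFSet) : Prop :=
  ∃ hMA : M ⊆ A,
    ∀ (k : ℕ) (φ : Lst.Formula (Fin k)) (v : Fin k → ZFSet) (hv : ∀ i, v i ∈ M),
      (letI := zStruct M w;
       φ.Realize (fun i => (⟨v i, hv i⟩ : {x : ZFSet // x ∈ M}))) ↔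
      (letI := zStruct A w;
       φ.Realize (fun i => (⟨v i, hMA (hv i)⟩ : {x : ZFSet // x ∈ A})))

/-- `M ⊑ N`: `M ⊆ N` and `M ∩ ω₁ = N ∩ ω₁` (with ω₁ computed in `U`). -/
def SqSub (U : VClass) (M N : ZFSet) : Prop :=
  M ⊆ N ∧ M ∩ omega1 U = N ∩ omega1 U

/-! ### Stationarity for sets of countable models -/

def FinSubsets (X : ZFSet) : ZFSet := ZFSet.sep (fun s => IsFin s) (ZFSet.powerset X)

/-- `g` is (the graph of) an algebra `[X]^{<ω} → X`. -/
def IsAlgebraOn (g X : ZFSet) : Prop := IsFunGraph g (FinSubsets X) ∧ MapsInto g X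

def ClosedUnder (z g : ZFSet) : Prop :=
  ∀ s b : ZFSet, ZFSet.pair s b ∈ g → s ⊆ z → b ∈ z

/-- The collection `S` is stationary in `[X]^ω`, as computed in the class `U`:
it meets every algebra on `X` lying in `U`. -/
def StatIn (U : VClass) (S : Set ZFSet) (X : ZFSet) : Prop :=
  ∀ g ∈ U, IsAlgebraOn g X →
    ∃ z : ZFSet, z ∈ S ∧ z ∈ U ∧ z ⊆ X ∧ IsCtble U z ∧ ClosedUnder z g

/-- `S` is semistationary in `[X]^ω` (computed in `U`): the set of `⊒`-extensions
of members of `S` is stationary. -/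
def SemistatIn (U : VClass) (S : Set ZFSet) (X : ZFSet) : Prop :=
  StatIn U {N | ∃ M ∈ S, M ⊆ N ∧ M ∩ omega1 U = N ∩ omega1 U} X

/-- "Club-many countable subsets of `X` belong to `S`" (computed in `U`):
all countable subsets of `X` closed under some fixed algebra belong to `S`. -/
def ClubMany (U : VClass) (S : Set ZFSet) (X : ZFSet) : Prop :=
  ∃ g ∈ U, IsAlgebraOn g X ∧
    ∀ z : ZFSet, z ∈ U → z ⊆ X → IsCtble U z → ClosedUnder z g → z ∈ S

/-! ### The Chang's Conjecture variants -/

/-- Strong Chang's Conjecture (SCC), relativized to `U`:  for all sufficiently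
large regular θ, every wellorder Δ of H_θ and every countable
`M ≺ (H_θ, ∈, Δ)`, there is `M̃ ≺ (H_θ, ∈, Δ)` with `M ⊏ M̃` and
`M̃ ∩ [sup(M ∩ ω₂), ω₂) ≠ ∅`. -/
def SCC (U : VClass) : Prop :=
  ∃ θ₀ : ZFSet, ∀ θ : ZFSet, IsRegular U θ → θ₀ ∈ θ →
    ∀ w ∈ U, IsWO w (Hset U θ) →
      ∀ M ∈ U, IsCtble U M → Prec M (Hset U θ) w →
        ∃ M' ∈ U, Prec M' (Hset U θ) w ∧ SqSub U M M' ∧ M ≠ M' ∧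
          ∃ β ∈ M', β ∈ omega2 U ∧ supZ (M ∩ omega2 U) ⊆ β

/-- `SCC^cof`, relativized to `U`: additionally the extensions reach cofinally
high below ω₂. -/
def SCCcof (U : VClass) : Prop :=
  ∃ θ₀ : ZFSet, ∀ θ : ZFSet, IsRegular U θ → θ₀ ∈ θ →
    ∀ w ∈ U, IsWO w (Hset U θ) →
      ∀ N ∈ U, IsCtble U N → Prec N (Hset U θ) w →
        ∀ α₀ ∈ omega2 U, ∃ α ∈ omega2 U, α₀ ⊆ α ∧
          ∃ N' ∈ U, Prec N' (Hset U θ) w ∧ SqSub U N N' ∧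
            ∃ β ∈ N', β ∈ omega2 U ∧ α ⊆ β

/-- `SCC^cof_gap`, relativized to `U`: as `SCC^cof`, with moreover
`N' ∩ [sup(N ∩ ω₂), α) = ∅`. -/
def SCCgap (U : VClass) : Prop :=
  ∃ θ₀ : ZFSet, ∀ θ : ZFSet, IsRegular U θ → θ₀ ∈ θ →
    ∀ w ∈ U, IsWO w (Hset U θ) →
      ∀ N ∈ U, IsCtble U N → Prec N (Hset U θ) w →
        ∀ α₀ ∈ omega2 U, ∃ α ∈ omega2 U, α₀ ⊆ α ∧
          ∃ N' ∈ U, Prec N' (Hset U θ) w ∧ SqSub U N N' ∧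
            (∃ β ∈ N', β ∈ omega2 U ∧ α ⊆ β) ∧
            (∀ β ∈ N', ¬ (supZ (N ∩ omega2 U) ⊆ β ∧ β ∈ α))

/-- Chang's Conjecture `(ω₂, ω₁) ↠ (ω₁, ω)`, relativized to `U`. -/
def CC (U : VClass) : Prop :=
  ∀ θ : ZFSet, IsOrd θ → omega2 U ⊆ θ →
    ∀ g ∈ U, IsAlgebraOn g (Hset U θ) →
      ∃ X ∈ U, X ⊆ Hset U θ ∧ ClosedUnder X g ∧
        cardLE U (omega1 U) (X ∩ omega2 U) ∧ X ∩ omega1 U ∈ omega1 U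

/-! ### Posets and combinatorial forcing notions -/

def leP (le a b : ZFSet) : Prop := ZFSet.pair a b ∈ le

def IsPoset (U : VClass) (P le : ZFSet) : Prop :=
  P ∈ U ∧ le ∈ U ∧
  (∀ p ∈ le, ∃ a ∈ P, ∃ b ∈ P, p = ZFSet.pair a b) ∧
  (∀ a ∈ P, leP le a a) ∧
  (∀ a b c : ZFSet, leP le a b → leP le b c → leP le a c)

def Compat (P le a b : ZFSet) : Prop := ∃ c ∈ P, leP le c a ∧ leP le c b

def IsAntichainP (P le A : ZFSet) : Prop :=
  A ⊆ P ∧ ∀ a ∈ A, ∀ b ∈ A, a ≠ b → ¬ Compat P le a b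

def IsMaxAntichain (P le A : ZFSet) : Prop :=
  IsAntichainP P le A ∧ ∀ p ∈ P, ∃ a ∈ A, Compat P le p a

def IsDense (P le D : ZFSet) : Prop := D ⊆ P ∧ ∀ p ∈ P, ∃ q ∈ D, leP le q p

def IsOpenP (P le D : ZFSet) : Prop := D ⊆ P ∧ ∀ q ∈ D, ∀ r ∈ P, leP le r q → r ∈ D

def IsFilterP (P le G : ZFSet) : Prop :=
  (∀ q ∈ G, q ∈ P) ∧ (∀ q ∈ G, ∀ p ∈ P, leP le q p → p ∈ G) ∧
  (∀ q ∈ G, ∀ r ∈ G, ∃ s ∈ G, leP le s q ∧ leP le s r)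

/-- `q` is an `(M, P)`-semigeneric condition (combinatorial characterization:
for every name for a countable ordinal coded in `M` by a maximal antichain `A`
and a value function `h : A → ω₁`, the set of `a ∈ A` with `h(a) ∈ M` is
predense below `q`).  This says exactly that `q ⊩ M̌ ⊑ M̌[Ġ]`. -/
def IsSemigeneric (U : VClass) (P le M q : ZFSet) : Prop :=
  q ∈ P ∧
    ∀ A ∈ M, IsMaxAntichain P le A →
      ∀ h ∈ M, IsFunGraph h A → MapsInto h (omega1 U) →
        ∀ r ∈ P, leP le r q →
          ∃ a ∈ A, Compat P le r a ∧ ∃ b : ZFSet, ZFSet.pair a b ∈ h ∧ b ∈ M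

/-- `q` is an `(M, P)`-master (generic) condition: for every maximal antichain
`A ∈ M`, `A ∩ M` is predense below `q`. -/
def IsMasterCond (P le M q : ZFSet) : Prop :=
  q ∈ P ∧
    ∀ A ∈ M, IsMaxAntichain P le A →
      ∀ r ∈ P, leP le r q → ∃ a ∈ A, a ∈ M ∧ Compat P le r a

/-- Semiproperness of the poset `(P, ≤)`, relativized to the class `U`. -/
def Semiproper (U : VClass) (P le : ZFSet) : Prop :=
  ∃ θ₀ : ZFSet, ∀ θ : ZFSet, IsRegular U θ → θ₀ ∈ θ →
    ∀ M ∈ U, IsCtble U M → Prec M (Hset U θ) ∅ → P ∈ M → le ∈ M →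
      ∀ q ∈ M, q ∈ P → ∃ q' ∈ P, leP le q' q ∧ IsSemigeneric U P le M q'

/-- Properness of the poset `(P, ≤)`, relativized to the class `U`. -/
def Proper (U : VClass) (P le : ZFSet) : Prop :=
  ∃ θ₀ : ZFSet, ∀ θ : ZFSet, IsRegular U θ → θ₀ ∈ θ →
    ∀ M ∈ U, IsCtble U M → Prec M (Hset U θ) ∅ → P ∈ M → le ∈ M →
      ∀ q ∈ M, q ∈ P → ∃ q' ∈ P, leP le q' q ∧ IsMasterCond P le M q'

/-- A coded `P`-name for a function `dom → rng` into the ordinals: to each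
`α ∈ dom` is attached a maximal antichain of `P` (the conditions deciding the
value at `α`) together with the ordinal values decided; coded as the set of
triples `((α, a), β)`. -/
def OrdName (U : VClass) (P le n dom rng : ZFSet) : Prop :=
  n ∈ U ∧
  (∀ t ∈ n, ∃ α ∈ dom, ∃ a ∈ P, ∃ β ∈ rng, t = ZFSet.pair (ZFSet.pair α a) β) ∧
  (∀ α ∈ dom,
    IsMaxAntichain P le
      (ZFSet.sep (fun a => ∃ β : ZFSet, ZFSet.pair (ZFSet.pair α a) β ∈ n) P)) ∧
  (∀ α a β β' : ZFSet, ZFSet.pair (ZFSet.pair α a) β ∈ n →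
      ZFSet.pair (ZFSet.pair α a) β' ∈ n → β = β')

def ClubInOrd (C γ : ZFSet) : Prop :=
  C ⊆ γ ∧ Unbdd C γ ∧ ∀ β ∈ γ, β ≠ ∅ → Unbdd (C ∩ β) β → β ∈ C

def StatSubOmega1 (U : VClass) (S : ZFSet) : Prop :=
  S ∈ U ∧ S ⊆ omega1 U ∧
    ∀ C ∈ U, ClubInOrd C (omega1 U) → ∃ δ ∈ S, δ ∈ C

/-- `(P, ≤)` preserves stationary subsets of ω₁ (combinatorial rendering: for
every stationary `S ⊆ ω₁`, every condition `p` and every coded name `n` for a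
function `ω₁ → ω₁`, some `q ≤ p` forces some `δ ∈ S` to be closed under the
named function; such `δ` form a club of the extension). -/
def PreservesStatOmega1 (U : VClass) (P le : ZFSet) : Prop :=
  ∀ S : ZFSet, StatSubOmega1 U S →
    ∀ p ∈ P, ∀ n : ZFSet, OrdName U P le n (omega1 U) (omega1 U) →
      ∃ q ∈ P, leP le q p ∧ ∃ δ ∈ S, ∀ α ∈ δ, ∀ a β : ZFSet,
        ZFSet.pair (ZFSet.pair α a) β ∈ n → Compat P le q a → β ∈ δ

/-- `(P, ≤)` is *nonreasonable at `[ω₂]^ω`*: some condition `p`, together with a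
coded name `n` for a function `F : [ω₂]^{<ω} → ω₂` of the extension, forces
that no ground-model countable `z ⊆ ω₂` is closed under `F`; i.e. `P` forces
the ground-model set `([ω₂]^ω)^V` to be nonstationary. -/
def NonreasonableAtOmega2 (U : VClass) (P le : ZFSet) : Prop :=
  ∃ p ∈ P, ∃ n : ZFSet,
    OrdName U P le n (FinSubsets (omega2 U)) (omega2 U) ∧
    ∀ z ∈ U, z ⊆ omega2 U → IsCtble U z →
      ∀ r ∈ P, leP le r p →
        ∃ s a β : ZFSet, s ⊆ z ∧ ZFSet.pair (ZFSet.pair s a) β ∈ n ∧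
          Compat P le r a ∧ β ∉ z

/-- σ-distributivity of `(P, ≤)` (computed in `U`): any countable family of
open dense sets (coded in `U` as a function on ω) has intersection dense. -/
def SigmaDistributive (U : VClass) (P le : ZFSet) : Prop :=
  ∀ d ∈ U, IsFunGraph d ZFSet.omega →
    (∀ m D : ZFSet, ZFSet.pair m D ∈ d → IsDense P le D ∧ IsOpenP P le D) →
    ∀ p ∈ P, ∃ q ∈ P, leP le q p ∧ ∀ m D : ZFSet, ZFSet.pair m D ∈ d → q ∈ D

/-- The `†` ("dagger") principle relativized to `U`: every poset preserving
stationary subsets of ω₁ is semiproper. -/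
def Dagger (U : VClass) : Prop :=
  ∀ P le : ZFSet, IsPoset U P le → PreservesStatOmega1 U P le → Semiproper U P le

/-- `†_{ω₂}`: every poset of size `≤ ω₂` preserving stationary subsets of ω₁ is
semiproper. -/
def DaggerOmega2 (U : VClass) : Prop :=
  ∀ P le : ZFSet, IsPoset U P le → cardLE U P (omega2 U) →
    PreservesStatOmega1 U P le → Semiproper U P le

/-- Martin's Maximum, relativized to `U`. -/
def MM (U : VClass) : Prop :=
  ∀ P le : ZFSet, IsPoset U P le → PreservesStatOmega1 U P le →
    ∀ D ∈ U, IsFunGraph D (omega1 U) →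
      (∀ α d : ZFSet, ZFSet.pair α d ∈ D → IsDense P le d) →
      ∃ G : ZFSet, IsFilterP P le G ∧
        ∀ α ∈ omega1 U, ∀ d : ZFSet, ZFSet.pair α d ∈ D → ∃ q ∈ G, q ∈ d

/-! ### Class models of ZFC -/

def prodZ (x y : ZFSet) : ZFSet :=
  ZFSet.sep (fun p => ∃ a ∈ x, ∃ b ∈ y, p = ZFSet.pair a b)
    (ZFSet.powerset (ZFSet.powerset (x ∪ y)))

def diffZ (x y : ZFSet) : ZFSet := ZFSet.sep (fun a => a ∉ y) x

def domZ (x : ZFSet) : ZFSet :=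
  ZFSet.sep (fun a => ∃ b : ZFSet, ZFSet.pair a b ∈ x) (ZFSet.sUnion (ZFSet.sUnion x))

def convZ (x : ZFSet) : ZFSet :=
  ZFSet.sep (fun p => ∃ a b : ZFSet, ZFSet.pair a b ∈ x ∧ p = ZFSet.pair b a)
    (prodZ (ZFSet.sUnion (ZFSet.sUnion x)) (ZFSet.sUnion (ZFSet.sUnion x)))

def memRelZ (x y : ZFSet) : ZFSet :=
  ZFSet.sep (fun p => ∃ a ∈ x, ∃ b ∈ y, a ∈ b ∧ p = ZFSet.pair a b) (prodZ x y)

def tripBound (x : ZFSet) : ZFSet :=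
  (ZFSet.sUnion (ZFSet.sUnion x)) ∪ (ZFSet.sUnion (ZFSet.sUnion (ZFSet.sUnion (ZFSet.sUnion x))))

def perm1Z (x : ZFSet) : ZFSet :=
  ZFSet.sep
    (fun p => ∃ a b c : ZFSet,
      ZFSet.pair (ZFSet.pair a b) c ∈ x ∧ p = ZFSet.pair (ZFSet.pair a c) b)
    (prodZ (prodZ (tripBound x) (tripBound x)) (tripBound x))

def perm2Z (x : ZFSet) : ZFSet :=
  ZFSet.sep
    (fun p => ∃ a b c : ZFSet,
      ZFSet.pair (ZFSet.pair a b) c ∈ x ∧ p = ZFSet.pair (ZFSet.pair b c) a)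
    (prodZ (prodZ (tripBound x) (tripBound x)) (tripBound x))

def IsTransClass (V : VClass) : Prop := ∀ x ∈ V, ∀ y ∈ x, y ∈ V

def ContainsOrds (V : VClass) : Prop := ∀ α : ZFSet, IsOrd α → α ∈ V

/-- Closure under the Gödel operations. -/
def GodelClosed (V : VClass) : Prop :=
  (∀ x ∈ V, ∀ y ∈ V, ({x, y} : ZFSet) ∈ V) ∧
  (∀ x ∈ V, ∀ y ∈ V, prodZ x y ∈ V) ∧
  (∀ x ∈ V, ∀ y ∈ V, memRelZ x y ∈ V) ∧
  (∀ x ∈ V, ∀ y ∈ V, diffZ x y ∈ V) ∧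
  (∀ x ∈ V, ∀ y ∈ V, x ∩ y ∈ V) ∧
  (∀ x ∈ V, ZFSet.sUnion x ∈ V) ∧
  (∀ x ∈ V, domZ x ∈ V) ∧
  (∀ x ∈ V, convZ x ∈ V) ∧
  (∀ x ∈ V, perm1Z x ∈ V) ∧
  (∀ x ∈ V, perm2Z x ∈ V)

def AlmostUniversal (V : VClass) : Prop :=
  ∀ x : ZFSet, (∀ y ∈ x, y ∈ V) → ∃ z ∈ V, x ⊆ z

def HasChoice (V : VClass) : Prop := ∀ x ∈ V, ∃ w ∈ V, IsWO w x

/-- `V` is a transitive (proper-class) model of ZFC, by Jech's criterion: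
transitive, contains all ordinals, closed under the Gödel operations, almost
universal, and satisfies choice. -/
def IsZFCModel (V : VClass) : Prop :=
  IsTransClass V ∧ ContainsOrds V ∧ GodelClosed V ∧ AlmostUniversal V ∧ HasChoice V

/-- `G` is a `(V, P)`-generic filter. -/
def IsGenericOver (V : VClass) (P le G : ZFSet) : Prop :=
  IsFilterP P le G ∧ ∀ D ∈ V, IsDense P le D → ∃ q ∈ G, q ∈ D

/-- `W = V[G]`: the least ZFC class model extending `V` and containing `G`. -/
def IsGenericExt (V W : VClass) (G : ZFSet) : Prop :=
  IsZFCModel W ∧ V ⊆ W ∧ G ∈ W ∧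
    ∀ W' : VClass, IsZFCModel W' → V ⊆ W' → G ∈ W' → W ⊆ W'

/-! ### Cohen forcing and the club-shooting poset -/

def twoZ : ZFSet := succZ (succZ ∅)

/-- Cohen forcing `Add(ω)`: finite binary sequences. -/
def CohenP : ZFSet :=
  ZFSet.sep (fun f => ∃ m ∈ ZFSet.omega, IsFunGraph f m ∧ MapsInto f twoZ)
    (ZFSet.powerset (prodZ ZFSet.omega twoZ))

def CohenLe : ZFSet :=
  ZFSet.sep (fun p => ∃ f ∈ CohenP, ∃ g ∈ CohenP, p = ZFSet.pair f g ∧ g ⊆ f)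
    (prodZ CohenP CohenP)

/-- The Skolem hull of `X` inside `(A, ∈, w)`: the least `N ⊇ X` with
`N ≺ (A, ∈, w)`. -/
def SkHull (A w X : ZFSet) : ZFSet :=
  Classical.epsilon fun N =>
    X ⊆ N ∧ Prec N A w ∧ ∀ N' : ZFSet, X ⊆ N' → Prec N' A w → N ⊆ N'

/-- a countable subset of `ω₂` (of `W`) which is *not* in the ground model `V`. -/
def IsNewCtblSub (V W : VClass) (z : ZFSet) : Prop :=
  z ∈ W ∧ z ∉ V ∧ z ⊆ omega2 V ∧ IsCtble W z

def seg (f lam X : ZFSet) : ZFSet :=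
  ZFSet.sep (fun b => ∃ ξ ∈ lam, ∃ y : ZFSet, ZFSet.pair ξ y ∈ f ∧ b ∈ y) X

/-- A condition of `𝔺([ω₂]^ω − V)` as computed in `W ⊇ V`: a countable
continuous `⊂`-increasing function from a countable successor ordinal into the
countable subsets of ω₂ not in `V`. -/
def IsChainCond (V W : VClass) (f : ZFSet) : Prop :=
  f ∈ W ∧
  (∃ η : ZFSet, IsOrd η ∧ η ∈ omega1 W ∧ IsFunGraph f (succZ η)) ∧
  (∀ ξ y : ZFSet, ZFSet.pair ξ y ∈ f → IsNewCtblSub V W y) ∧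
  (∀ ξ ζ y z : ZFSet, ZFSet.pair ξ y ∈ f → ZFSet.pair ζ z ∈ f → ξ ∈ ζ →
      y ⊆ z ∧ y ≠ z) ∧
  (∀ lam y : ZFSet, ZFSet.pair lam y ∈ f → IsLimitOrd lam →
      y = seg f lam (omega2 V))

/-- The club-shooting poset `𝔺([ω₂]^ω − V)`, as computed in `W ⊇ V`. -/
def ClubShootP (V W : VClass) : ZFSet :=
  ZFSet.sep (fun f => IsChainCond V W f)
    (ZFSet.powerset (prodZ (omega1 W) (ZFSet.powerset (omega2 V))))

/-- Ordering of the club-shooting poset: end-extension. -/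
def ClubShootLe (V W : VClass) : ZFSet :=
  ZFSet.sep
    (fun p => ∃ g ∈ ClubShootP V W, ∃ f ∈ ClubShootP V W, p = ZFSet.pair g f ∧ f ⊆ g)
    (prodZ (ClubShootP V W) (ClubShootP V W))

/-! ### cofinality -/

def CofLE (U : VClass) (δ α : ZFSet) : Prop :=
  ∃ x ∈ U, x ⊆ δ ∧ Unbdd x δ ∧ cardLE U x α

/-- The cofinality of `δ`, computed in `U`. -/
def Cof (U : VClass) (δ : ZFSet) : ZFSet :=
  Classical.epsilon fun α => IsOrd α ∧ CofLE U δ α ∧ ∀ β ∈ α, ¬ CofLE U δ β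

/-! ### Ideals, precipitousness, measurability -/

def sInterZ (c κ : ZFSet) : ZFSet := ZFSet.sep (fun b => ∀ y ∈ c, b ∈ y) κ

/-- `I` is a (proper, countably complete, nontrivial) ideal on `κ`, computed in `U`. -/
def IsIdealOn (U : VClass) (I κ : ZFSet) : Prop :=
  I ∈ U ∧ (∀ x ∈ I, x ⊆ κ) ∧ κ ∉ I ∧
  (∀ α ∈ κ, ({α} : ZFSet) ∈ I) ∧
  (∀ x ∈ I, ∀ y : ZFSet, y ⊆ x → y ∈ I) ∧
  (∀ c ∈ U, (∀ y ∈ c, y ∈ I) → IsCtble U c → ZFSet.sUnion c ∈ I)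

/-- `I` is a normal ideal on `κ`: additionally closed under diagonal unions. -/
def IsNormalIdeal (U : VClass) (I κ : ZFSet) : Prop :=
  IsIdealOn U I κ ∧
  ∀ g ∈ U, IsFunGraph g κ → (∀ α x : ZFSet, ZFSet.pair α x ∈ g → x ∈ I) →
    ZFSet.sep (fun β => ∃ α ∈ β, ∃ x : ZFSet, ZFSet.pair α x ∈ g ∧ β ∈ x) κ ∈ I

/-- The `I`-positive subsets of `κ`: the conditions of `P(κ)/I`. -/
def posSets (I κ : ZFSet) : ZFSet := ZFSet.sep (fun S => S ∉ I) (ZFSet.powerset κ)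

/-- The ordering of `P(κ)/I`: `S ≤ T` iff `S − T ∈ I`. -/
def quotLe (I κ : ZFSet) : ZFSet :=
  ZFSet.sep
    (fun p => ∃ S ∈ posSets I κ, ∃ T ∈ posSets I κ, p = ZFSet.pair S T ∧ diffZ S T ∈ I)
    (prodZ (posSets I κ) (posSets I κ))

/-- finite sequences from `A`, coded as functions with domain some `m ∈ ω`. -/
def FinSeqs (A : ZFSet) : ZFSet :=
  ZFSet.sep (fun s => ∃ m ∈ ZFSet.omega, IsFunGraph s m ∧ MapsInto s A)
    (ZFSet.powerset (prodZ ZFSet.omega A))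

def restrSeq (p m : ZFSet) : ZFSet :=
  ZFSet.sep (fun t => ∃ k ∈ m, ∃ y : ZFSet, t = ZFSet.pair k y) p

/-- Precipitousness of an ideal `I` on ω₁ (computed in `U`), via the
Galvin–Jech–Prikry game characterization: the "empty" player (who moves first,
playing the sets `a m`, against replies `b m`, all `I`-positive and
decreasing) has no winning strategy producing plays with empty intersection. -/
def IsPrecipitous (U : VClass) (I : ZFSet) : Prop :=
  ¬ ∃ st ∈ U, IsFunGraph st (FinSeqs (ZFSet.powerset (omega1 U))) ∧
    ∀ a ∈ U, ∀ b ∈ U, IsFunGraph a ZFSet.omega → IsFunGraph b ZFSet.omega →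
      (∀ m y : ZFSet, ZFSet.pair m y ∈ a → y ⊆ omega1 U ∧ y ∉ I) →
      (∀ m y : ZFSet, ZFSet.pair m y ∈ b → y ⊆ omega1 U ∧ y ∉ I) →
      (∀ m y z : ZFSet, ZFSet.pair m y ∈ a → ZFSet.pair m z ∈ b → z ⊆ y) →
      (∀ m y z : ZFSet, ZFSet.pair m y ∈ b → ZFSet.pair (succZ m) z ∈ a → z ⊆ y) →
      (∀ m ∈ ZFSet.omega, ∀ y : ZFSet, ZFSet.pair m y ∈ a →
        ZFSet.pair (restrSeq b m) y ∈ st) →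
      ZFSet.sep (fun ξ => ∀ m ∈ ZFSet.omega, ∀ y : ZFSet, ZFSet.pair m y ∈ a → ξ ∈ y)
        (omega1 U) = ∅

/-- `V` has a measurable cardinal: a κ-complete nonprincipal ultrafilter on an
uncountable κ, all computed in `V`. -/
def HasMeasurable (V : VClass) : Prop :=
  ∃ κ Uf : ZFSet, IsOrd κ ∧ ZFSet.omega ∈ κ ∧ Uf ∈ V ∧
    (∀ x ∈ Uf, x ⊆ κ) ∧ κ ∈ Uf ∧ (∅ : ZFSet) ∉ Uf ∧
    (∀ x ∈ Uf, ∀ y : ZFSet, y ∈ V → x ⊆ y → y ⊆ κ → y ∈ Uf) ∧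
    (∀ x : ZFSet, x ∈ V → x ⊆ κ → (x ∈ Uf ∨ diffZ κ x ∈ Uf)) ∧
    (∀ α ∈ κ, diffZ κ ({α} : ZFSet) ∈ Uf) ∧
    (∀ c ∈ V, (∀ y ∈ c, y ∈ Uf) → cardLT V c κ → sInterZ c κ ∈ Uf)

/-! ### Trees on ω₂ -/

def predSet (T lt t : ZFSet) : ZFSet := ZFSet.sep (fun s => ZFSet.pair s t ∈ lt) T

def IsOrderIso (e X r α : ZFSet) : Prop :=
  IsBijGraph e X α ∧
    ∀ s t u v : ZFSet, ZFSet.pair s u ∈ e → ZFSet.pair t v ∈ e →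
      (ZFSet.pair s t ∈ r ↔ u ∈ v)

/-- The α-th level of the tree `(T, <_T)`. -/
def levelAt (T lt α : ZFSet) : ZFSet :=
  ZFSet.sep (fun t => ∃ e : ZFSet, IsOrderIso e (predSet T lt t) lt α) T

def IsTree (T lt : ZFSet) : Prop :=
  (∀ p ∈ lt, ∃ a ∈ T, ∃ b ∈ T, p = ZFSet.pair a b) ∧
  (∀ a ∈ T, ZFSet.pair a a ∉ lt) ∧
  (∀ a b c : ZFSet, ZFSet.pair a b ∈ lt → ZFSet.pair b c ∈ lt → ZFSet.pair a c ∈ lt) ∧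
  (∀ t ∈ T, ∀ s ∈ predSet T lt t, ∀ s' ∈ predSet T lt t,
      s ≠ s' → (ZFSet.pair s s' ∈ lt ∨ ZFSet.pair s' s ∈ lt)) ∧
  (∀ x : ZFSet, x ⊆ T → x ≠ ∅ → ∃ m ∈ x, ∀ y ∈ x, ZFSet.pair y m ∉ lt)

/-- `(T, <_T)` is an Aronszajn tree on ω₂ (computed in `U`): height ω₂, levels
of size `< ω₂`, no cofinal branch. -/
def IsAronszajnOmega2 (U : VClass) (T lt : ZFSet) : Prop :=
  IsTree T lt ∧
  (∀ α ∈ omega2 U, levelAt T lt α ≠ ∅) ∧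
  (∀ t ∈ T, ∃ α ∈ omega2 U, t ∈ levelAt T lt α) ∧
  (∀ α ∈ omega2 U, cardLT U (levelAt T lt α) (omega2 U)) ∧
  ¬ ∃ b : ZFSet, b ⊆ T ∧
      (∀ s ∈ b, ∀ t ∈ b, s = t ∨ ZFSet.pair s t ∈ lt ∨ ZFSet.pair t s ∈ lt) ∧
      ∀ α ∈ omega2 U, ∃ t ∈ b, t ∈ levelAt T lt α

/-- `(T, <_T)` is special: the union of ω₁ many antichains. -/
def IsSpecialTree (U : VClass) (T lt : ZFSet) : Prop :=
  ∃ c : ZFSet, IsFunGraph c T ∧ MapsInto c (omega1 U) ∧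
    ∀ s t γ : ZFSet, ZFSet.pair s γ ∈ c → ZFSet.pair t γ ∈ c → ZFSet.pair s t ∉ lt

/-- The Continuum Hypothesis, computed in `U`. -/
def CH (U : VClass) : Prop := cardLE U (ZFSet.powerset ZFSet.omega) (omega1 U)

/-! ### Ladder systems -/

/-- `S²₀ = ω₂ ∩ cof(ω)`, computed in `U`. -/
def S20 (U : VClass) : ZFSet :=
  ZFSet.sep (fun α => IsLimitOrd α ∧ ∃ x : ZFSet, x ⊆ α ∧ IsCtble U x ∧ Unbdd x α)
    (omega2 U)

/-- `S²₁ = ω₂ ∩ cof(ω₁)`, computed in `U`. -/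
def S21 (U : VClass) : ZFSet :=
  ZFSet.sep (fun α => IsLimitOrd α ∧ ¬ ∃ x : ZFSet, x ⊆ α ∧ IsCtble U x ∧ Unbdd x α)
    (omega2 U)

/-- `D` is (the graph of) a ladder system on `S²₀`: `D(α)` is cofinal in `α` of
order type ω (all proper initial segments finite). -/
def IsLadderOn (U : VClass) (D : ZFSet) : Prop :=
  IsFunGraph D (S20 U) ∧
    ∀ α d : ZFSet, ZFSet.pair α d ∈ D →
      d ⊆ α ∧ Unbdd d α ∧ ∀ β ∈ α, IsFin (d ∩ β)

/-- A *nonreflecting* ladder system on `S²₀`: for every `γ ∈ S²₁` there is a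
club `C ⊆ γ` and an injective choice function `g` on `C` with `g(α) ∈ D(α)`. -/
def IsNonreflectingLadder (U : VClass) (D : ZFSet) : Prop :=
  IsLadderOn U D ∧
    ∀ γ : ZFSet, γ ∈ S21 U →
      ∃ C g : ZFSet, ClubInOrd C γ ∧ IsFunGraph g C ∧
        (∀ a a' b : ZFSet, ZFSet.pair a b ∈ g → ZFSet.pair a' b ∈ g → a = a') ∧
        (∀ α y : ZFSet, ZFSet.pair α y ∈ g → ∃ d : ZFSet, ZFSet.pair α d ∈ D ∧ y ∈ d)

/-- `W` is *internally club* (`W ∈ IC`): `ω₁ ⊆ W`, `|W| = ω₁`, and `W ∩ [W]^ω`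
contains a club in `[W]^ω`. -/
def IsIC (U : VClass) (W : ZFSet) : Prop :=
  omega1 U ⊆ W ∧ cardEq U W (omega1 U) ∧
    ∃ g : ZFSet, IsAlgebraOn g W ∧
      ∀ z : ZFSet, z ⊆ W → IsCtble U z → ClosedUnder z g → z ∈ W


/-! ### Auxiliary infrastructure for Statement 10 -/

universe u

/-- image with classical definability -/
noncomputable def imageZ (f : ZFSet → ZFSet) (x : ZFSet) : ZFSet :=
  @ZFSet.image f (Classical.allZFSetDefinable _) x

lemma mem_imageZ {f : ZFSet → ZFSet} {x y : ZFSet} :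
    y ∈ imageZ f x ↔ ∃ a ∈ x, f a = y := by
  unfold imageZ
  exact @ZFSet.mem_image f (Classical.allZFSetDefinable _) x y

/-- von Neumann naturals -/
def natZ : ℕ → ZFSet
  | 0 => ∅
  | n + 1 => insert (natZ n) (natZ n)

lemma natZ_mem_omega (n : ℕ) : natZ n ∈ ZFSet.omega := by
  induction n with
  | zero => exact ZFSet.omega_zero
  | succ n ih => exact ZFSet.omega_succ ih

lemma natZ_eq_mk (n : ℕ) : natZ n = ZFSet.mk (PSet.ofNat n) := by
  induction n with
  | zero => rfl
  | succ n ih => show insert (natZ n) (natZ n) = _; rw [ih]; rfl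

lemma mem_omega_iff {x : ZFSet} : x ∈ ZFSet.omega ↔ ∃ n : ℕ, x = natZ n := by
  constructor
  · intro hx
    induction x using Quotient.inductionOn with
    | h px =>
      have hpx : px ∈ PSet.omega := ZFSet.mk_mem_iff.1 hx
      obtain ⟨⟨n⟩, hn⟩ := hpx
      exact ⟨n, by rw [natZ_eq_mk]; exact ZFSet.sound hn⟩
  · rintro ⟨n, rfl⟩; exact natZ_mem_omega n

lemma toSet_natZ_finite (n : ℕ) : (natZ n).toSet.Finite := by
  induction n with
  | zero =>
    show (∅ : ZFSet).toSet.Finite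
    rw [show (∅ : ZFSet).toSet = ∅ from ZFSet.coe_empty]; exact Set.finite_empty
  | succ n ih =>
    show (insert (natZ n) (natZ n)).toSet.Finite
    rw [show (insert (natZ n) (natZ n)).toSet = insert (natZ n) (natZ n).toSet from ZFSet.coe_insert _ _]; exact ih.insert _

/-- value of a (graph of a) function -/
noncomputable def funVal (g x : ZFSet) : ZFSet :=
  Classical.epsilon fun b => ZFSet.pair x b ∈ g

lemma funVal_mem {g d x : ZFSet} (hg : IsFunGraph g d) (hx : x ∈ d) :
    ZFSet.pair x (funVal g x) ∈ g := by
  obtain ⟨b, hb, -⟩ := hg.2.1 x hx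
  exact Classical.epsilon_spec (p := fun b => ZFSet.pair x b ∈ g) ⟨b, hb⟩

lemma funVal_unique {g d x b : ZFSet} (hg : IsFunGraph g d) (hx : x ∈ d)
    (hb : ZFSet.pair x b ∈ g) : b = funVal g x := by
  obtain ⟨c, -, hu⟩ := hg.2.1 x hx
  exact (hu b hb).trans (hu _ (funVal_mem hg hx)).symm

/-- the ZF-graph of a Lean-level function on a domain -/
noncomputable def graphOf (F : ZFSet → ZFSet) (d : ZFSet) : ZFSet :=
  imageZ (fun t => ZFSet.pair t (F t)) d

lemma mem_graphOf {F : ZFSet → ZFSet} {d p : ZFSet} :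
    p ∈ graphOf F d ↔ ∃ t ∈ d, p = ZFSet.pair t (F t) := by
  unfold graphOf
  rw [mem_imageZ]
  constructor <;> rintro ⟨t, ht, h⟩ <;> exact ⟨t, ht, h.symm⟩

lemma pair_mem_graphOf {F : ZFSet → ZFSet} {d t : ZFSet} (ht : t ∈ d) :
    ZFSet.pair t (F t) ∈ graphOf F d :=
  mem_graphOf.2 ⟨t, ht, rfl⟩

lemma isFunGraph_graphOf (F : ZFSet → ZFSet) (d : ZFSet) :
    IsFunGraph (graphOf F d) d := by
  refine ⟨?_, ?_, ?_⟩
  · intro p hp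
    obtain ⟨t, ht, he⟩ := mem_graphOf.1 hp
    exact ⟨t, ht, F t, he⟩
  · intro a ha
    refine ⟨F a, pair_mem_graphOf ha, ?_⟩
    intro b hb
    obtain ⟨t, ht, he⟩ := mem_graphOf.1 hb
    obtain ⟨h1, h2⟩ := ZFSet.pair_injective he
    rw [h2, h1]
  · intro a b hab
    obtain ⟨t, ht, he⟩ := mem_graphOf.1 hab
    obtain ⟨h1, -⟩ := ZFSet.pair_injective he
    rw [h1]; exact ht

lemma closedUnder_graphOf_apply {F : ZFSet → ZFSet} {d z t : ZFSet}
    (hcl : ClosedUnder z (graphOf F d)) (ht : t ∈ d) (htz : t ⊆ z) : F t ∈ z :=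
  hcl t (F t) (pair_mem_graphOf ht) htz

/-- `IsFin` matches `Set.Finite` of the coercion. -/
lemma isFin_iff {s : ZFSet} : IsFin s ↔ s.toSet.Finite := by
  constructor
  · rintro ⟨n, hn, G, ⟨⟨hfg, hmaps, hinj⟩, -⟩⟩
    obtain ⟨m, rfl⟩ := mem_omega_iff.1 hn
    have him : (funVal G '' s.toSet) ⊆ (natZ m).toSet := by
      rintro y ⟨x, hx, rfl⟩
      exact hmaps x _ (funVal_mem hfg hx)
    have hinjOn : Set.InjOn (funVal G) s.toSet := by
      intro x hx y hy hxy
      exact hinj x y (funVal G x) (funVal_mem hfg hx) (hxy ▸ funVal_mem hfg hy)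
    exact Set.Finite.of_finite_image ((toSet_natZ_finite m).subset him) hinjOn
  · intro hfin
    suffices haux : ∀ T : Set ZFSet, T.Finite → ∀ s : ZFSet, s.toSet = T → IsFin s from
      haux _ hfin s rfl
    intro T hT
    refine Set.Finite.induction_on (motive := fun T _ => ∀ s : ZFSet, s.toSet = T → IsFin s) T hT ?_ ?_
    · intro s hs
      have hs0 : s = ∅ := SetLike.coe_injective (show s.toSet = (∅ : ZFSet).toSet by rw [hs, show (∅ : ZFSet).toSet = ∅ from ZFSet.coe_empty])
      subst hs0
      refine ⟨natZ 0, natZ_mem_omega 0, ∅, ⟨⟨?_, ?_, ?_⟩, ?_, ?_⟩, ?_⟩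
      · intro p hp; exact absurd hp (ZFSet.notMem_empty p)
      · intro a ha; exact absurd ha (ZFSet.notMem_empty a)
      · intro a b hab; exact absurd hab (ZFSet.notMem_empty _)
      · intro a b hab; exact absurd hab (ZFSet.notMem_empty _)
      · intro a a' b h _; exact absurd h (ZFSet.notMem_empty _)
      · intro b hb; exact absurd hb (ZFSet.notMem_empty b)
    · rintro a T' haT' hT'fin IH s hs
      have hmem : ∀ x : ZFSet, x ∈ s ↔ x = a ∨ x ∈ T' := by
        intro x
        have : x ∈ s.toSet ↔ x ∈ insert a T' := by rw [hs]
        exact this.trans Set.mem_insert_iff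
      set s' : ZFSet := ZFSet.sep (fun y => y ≠ a) s with hs'def
      have hmem_s' : ∀ x : ZFSet, x ∈ s' ↔ x ∈ s ∧ x ≠ a := by
        intro x
        rw [hs'def]
        exact ZFSet.mem_sep
      have hs' : s'.toSet = T' := by
        ext x
        rw [show x ∈ s'.toSet ↔ x ∈ s' from Iff.rfl, hmem_s' x]
        constructor
        · rintro ⟨hxs, hxa⟩
          rcases (hmem x).1 hxs with rfl | hxT
          · exact absurd rfl hxa
          · exact hxT
        · intro hxT
          exact ⟨(hmem x).2 (Or.inr hxT), fun hc => haT' (hc ▸ hxT)⟩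
      obtain ⟨n, hn, G, ⟨⟨hfg1, hfg2, hfg3⟩, hmaps, hinj⟩, hsurj⟩ := IH s' hs'
      have ha_s : a ∈ s := (hmem a).2 (Or.inl rfl)
      have ha_ns' : a ∉ s' := fun hc => ((hmem_s' a).1 hc).2 rfl
      have hs'_sub : s' ⊆ s := fun x hx => ((hmem_s' x).1 hx).1
      have hmem' : ∀ x : ZFSet, x ∈ s ↔ x = a ∨ x ∈ s' := by
        intro x
        rw [hmem x]
        constructor
        · rintro (rfl | hxT)
          · exact Or.inl rfl
          · refine Or.inr ((hmem_s' x).2 ⟨(hmem x).2 (Or.inr hxT), ?_⟩)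
            intro hc
            exact haT' (hc ▸ hxT)
        · rintro (rfl | hxs')
          · exact Or.inl rfl
          · have h1 := ((hmem_s' x).1 hxs').1
            exact (hmem x).1 h1
      have hnn : n ∉ n := ZFSet.mem_irrefl n
      refine ⟨insert n n, ZFSet.omega_succ hn, insert (ZFSet.pair a n) G,
        ⟨⟨?_, ?_, ?_⟩, ?_, ?_⟩, ?_⟩
      · intro p hp
        rcases ZFSet.mem_insert_iff.1 hp with rfl | hpG
        · exact ⟨a, ha_s, n, rfl⟩
        · obtain ⟨x, hx, b, hb⟩ := hfg1 p hpG
          exact ⟨x, hs'_sub hx, b, hb⟩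
      · intro x hx
        rcases (hmem' x).1 hx with rfl | hxs'
        · refine ⟨n, ZFSet.mem_insert _ _, ?_⟩
          intro b' hb'
          rcases ZFSet.mem_insert_iff.1 hb' with he | hbG
          · exact (ZFSet.pair_injective he).2
          · exact absurd (hfg3 _ _ hbG) ha_ns'
        · obtain ⟨b, hb, hub⟩ := hfg2 x hxs'
          refine ⟨b, ZFSet.mem_insert_of_mem _ hb, ?_⟩
          intro b' hb'
          rcases ZFSet.mem_insert_iff.1 hb' with he | hbG
          · exact absurd hxs' (by rw [(ZFSet.pair_injective he).1]; exact ha_ns')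
          · exact hub b' hbG
      · intro x b hxb
        rcases ZFSet.mem_insert_iff.1 hxb with he | hbG
        · exact (ZFSet.pair_injective he).1 ▸ ha_s
        · exact hs'_sub (hfg3 _ _ hbG)
      · intro x b hxb
        rcases ZFSet.mem_insert_iff.1 hxb with he | hbG
        · rw [(ZFSet.pair_injective he).2]; exact ZFSet.mem_insert _ _
        · exact ZFSet.mem_insert_of_mem _ (hmaps _ _ hbG)
      · intro x x' b hx hx'
        rcases ZFSet.mem_insert_iff.1 hx with he | hGx
        · rcases ZFSet.mem_insert_iff.1 hx' with he' | hGx'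
          · rw [(ZFSet.pair_injective he).1, (ZFSet.pair_injective he').1]
          · exact absurd ((ZFSet.pair_injective he).2 ▸ hmaps _ _ hGx') hnn
        · rcases ZFSet.mem_insert_iff.1 hx' with he' | hGx'
          · exact absurd ((ZFSet.pair_injective he').2 ▸ hmaps _ _ hGx) hnn
          · exact hinj x x' b hGx hGx'
      · intro b hb
        rcases ZFSet.mem_insert_iff.1 hb with rfl | hbn
        · exact ⟨a, ZFSet.mem_insert _ _⟩
        · obtain ⟨x, hx⟩ := hsurj b hbn
          exact ⟨x, ZFSet.mem_insert_of_mem _ hx⟩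

lemma mem_finSubsets {X s : ZFSet} :
    s ∈ FinSubsets X ↔ s ⊆ X ∧ s.toSet.Finite := by
  unfold FinSubsets
  rw [ZFSet.mem_sep, ZFSet.mem_powerset, isFin_iff]

lemma isAlgebraOn_graphOf {F : ZFSet → ZFSet} {X : ZFSet}
    (hF : ∀ t ∈ FinSubsets X, F t ∈ X) :
    IsAlgebraOn (graphOf F (FinSubsets X)) X := by
  refine ⟨isFunGraph_graphOf _ _, ?_⟩
  intro a b hab
  obtain ⟨t, ht, he⟩ := mem_graphOf.1 hab
  obtain ⟨-, h2⟩ := ZFSet.pair_injective he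
  rw [h2]; exact hF t ((ZFSet.pair_injective he).1 ▸ ht)

/-- an algebra on `W` forcing a fixed finite `s ⊆ W` into every closed set -/
lemma reach_algebra {W s w0 : ZFSet} (hw : w0 ∈ W) (hsW : s ⊆ W)
    (hfin : s.toSet.Finite) :
    ∃ k : ZFSet, IsAlgebraOn k W ∧ ∀ z : ZFSet, ClosedUnder z k → s ⊆ z := by
  classical
  set F : ZFSet → ZFSet :=
    fun t => if h : ∃ x, x ∈ s ∧ x ∉ t then Classical.choose h else w0 with hF
  refine ⟨graphOf F (FinSubsets W), isAlgebraOn_graphOf ?_, ?_⟩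
  · intro t _
    by_cases h : ∃ x, x ∈ s ∧ x ∉ t
    · simp only [hF, dif_pos h]; exact hsW (Classical.choose_spec h).1
    · simp only [hF, dif_neg h]; exact hw
  · intro z hz x hx
    by_contra hxz
    have htd : ZFSet.sep (fun y => y ∈ z) s ∈ FinSubsets W :=
      mem_finSubsets.2 ⟨fun y hy => hsW (ZFSet.mem_sep.1 hy).1,
        hfin.subset (fun y hy => (ZFSet.mem_sep.1 hy).1)⟩
    have htz : ZFSet.sep (fun y => y ∈ z) s ⊆ z := fun y hy => (ZFSet.mem_sep.1 hy).2
    have hFt := closedUnder_graphOf_apply hz htd htz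
    have hex : ∃ y, y ∈ s ∧ y ∉ ZFSet.sep (fun y => y ∈ z) s :=
      ⟨x, hx, fun hc => hxz (ZFSet.mem_sep.1 hc).2⟩
    simp only [hF, dif_pos hex] at hFt
    obtain ⟨hc1, hc2⟩ := Classical.choose_spec hex
    exact hc2 (ZFSet.mem_sep.2 ⟨hc1, hFt⟩)

/-- merging two algebras into one -/
lemma merge_algebras {X g h : ZFSet} (hg : IsAlgebraOn g X) (hh : IsAlgebraOn h X) :
    ∃ k : ZFSet, IsAlgebraOn k X ∧
      ∀ z : ZFSet, ClosedUnder z k → ClosedUnder z g ∧ ClosedUnder z h := by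
  classical
  by_cases hXfin : X.toSet.Finite
  · -- finite case: exhaust `X`
    have h0 : (∅ : ZFSet) ∈ FinSubsets X :=
      mem_finSubsets.2 ⟨fun y hy => absurd hy (ZFSet.notMem_empty y),
        by rw [show (∅ : ZFSet).toSet = ∅ from ZFSet.coe_empty]; exact Set.finite_empty⟩
    have hb0 : funVal g ∅ ∈ X := hg.2 _ _ (funVal_mem hg.1 h0)
    set F : ZFSet → ZFSet :=
      fun t => if hx : ∃ x, x ∈ X ∧ x ∉ t then Classical.choose hx else funVal g ∅
      with hF
    refine ⟨graphOf F (FinSubsets X), isAlgebraOn_graphOf ?_, ?_⟩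
    · intro t _
      by_cases hx : ∃ x, x ∈ X ∧ x ∉ t
      · simp only [hF, dif_pos hx]; exact (Classical.choose_spec hx).1
      · simp only [hF, dif_neg hx]; exact hb0
    · intro z hz
      have hXz : X ⊆ z := by
        intro x hx
        by_contra hxz
        have htd : ZFSet.sep (fun y => y ∈ z) X ∈ FinSubsets X :=
          mem_finSubsets.2 ⟨fun y hy => (ZFSet.mem_sep.1 hy).1,
            hXfin.subset (fun y hy => (ZFSet.mem_sep.1 hy).1)⟩
        have htz : ZFSet.sep (fun y => y ∈ z) X ⊆ z :=
          fun y hy => (ZFSet.mem_sep.1 hy).2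
        have hFt := closedUnder_graphOf_apply hz htd htz
        have hex : ∃ y, y ∈ X ∧ y ∉ ZFSet.sep (fun y => y ∈ z) X :=
          ⟨x, hx, fun hc => hxz (ZFSet.mem_sep.1 hc).2⟩
        simp only [hF, dif_pos hex] at hFt
        obtain ⟨hc1, hc2⟩ := Classical.choose_spec hex
        exact hc2 (ZFSet.mem_sep.2 ⟨hc1, hFt⟩)
      exact ⟨fun s b hsb _ => hXz (hg.2 s b hsb),
        fun s b hsb _ => hXz (hh.2 s b hsb)⟩
  · -- infinite case
    have hXinf : X.toSet.Infinite := hXfin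
    obtain ⟨e, einj, he⟩ : ∃ e : ℕ → ZFSet, Function.Injective e ∧ ∀ n, e n ∈ X := by
      refine ⟨fun n => (Set.Infinite.natEmbedding X.toSet hXinf n : ZFSet), ?_, ?_⟩
      · intro m n hmn
        exact (Set.Infinite.natEmbedding X.toSet hXinf).injective (Subtype.ext hmn)
      · intro n
        exact (Set.Infinite.natEmbedding X.toSet hXinf n).2
    set eSet : Set ℕ → ZFSet :=
      fun B => ZFSet.sep (fun x => ∃ i ∈ B, x = e i) X with heSet
    have mem_eSet : ∀ {B : Set ℕ} {x : ZFSet}, x ∈ eSet B ↔ ∃ i ∈ B, x = e i := by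
      intro B x
      simp only [heSet, ZFSet.mem_sep]
      constructor
      · rintro ⟨-, h⟩; exact h
      · rintro ⟨i, hi, rfl⟩; exact ⟨he i, ⟨i, hi, rfl⟩⟩
    have eSet_subX : ∀ B : Set ℕ, eSet B ⊆ X := by
      intro B x hx
      simp only [heSet, ZFSet.mem_sep] at hx
      exact hx.1
    have toSet_eSet_fin : ∀ {B : Set ℕ}, B.Finite → (eSet B).toSet.Finite := by
      intro B hB
      refine (hB.image e).subset ?_
      intro x hx
      obtain ⟨i, hi, rfl⟩ := mem_eSet.1 hx
      exact ⟨i, hi, rfl⟩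
    have eSeg_inj : ∀ {m n : ℕ}, eSet (Set.Iio m) = eSet (Set.Iio n) → m = n := by
      have aux : ∀ {a b : ℕ}, a < b → eSet (Set.Iio b) = eSet (Set.Iio a) → False := by
        intro a b hab hba
        have h1 : e a ∈ eSet (Set.Iio b) := mem_eSet.2 ⟨a, Set.mem_Iio.2 hab, rfl⟩
        rw [hba] at h1
        obtain ⟨i, hi, hie⟩ := mem_eSet.1 h1
        have h2 := einj hie
        have h3 := Set.mem_Iio.1 hi
        omega
      intro m n hmn
      rcases lt_trichotomy m n with hlt | heq | hgt
      · exact absurd hmn.symm (fun hc => aux hlt hc)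
      · exact heq
      · exact absurd hmn (fun hc => aux hgt hc)
    set dec : ZFSet → ZFSet :=
      fun t => ZFSet.sep (fun a => ¬ ∃ i, a = e i) t ∪ eSet {i | e (i + 3) ∈ t}
      with hdec
    have dec_mem : ∀ {t x : ZFSet},
        x ∈ dec t ↔ ((x ∈ t ∧ ¬ ∃ i, x = e i) ∨ ∃ i, e (i + 3) ∈ t ∧ x = e i) := by
      intro t x
      simp only [hdec, ZFSet.mem_union, ZFSet.mem_sep, mem_eSet, Set.mem_setOf_eq]
    have hplus3 : Function.Injective (fun i : ℕ => e (i + 3)) := by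
      intro a b hab
      have := einj hab
      omega
    have dec_fin : ∀ {t : ZFSet}, t ∈ FinSubsets X → dec t ∈ FinSubsets X := by
      intro t ht
      obtain ⟨htX, htfin⟩ := mem_finSubsets.1 ht
      refine mem_finSubsets.2 ⟨?_, ?_⟩
      · intro x hx
        rcases dec_mem.1 hx with ⟨hxt, -⟩ | ⟨i, -, rfl⟩
        · exact htX hxt
        · exact he i
      · have hB : ({i : ℕ | e (i + 3) ∈ t}).Finite := by
          have heq : {i : ℕ | e (i + 3) ∈ t} = (fun i : ℕ => e (i + 3)) ⁻¹' t.toSet := rfl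
          rw [heq]
          exact Set.Finite.preimage hplus3.injOn htfin
        refine ((htfin.union (hB.image e)).subset ?_)
        intro x hx
        rcases dec_mem.1 hx with ⟨hxt, -⟩ | ⟨i, hi, rfl⟩
        · exact Or.inl hxt
        · exact Or.inr ⟨i, hi, rfl⟩
    set F : ZFSet → ZFSet := fun t =>
      if h1 : ∃ n, t = eSet (Set.Iio n) then e (Classical.choose h1)
      else if e 2 ∈ t ∧ e 0 ∈ t ∧ e 1 ∉ t then funVal g (dec t)
      else if e 2 ∈ t ∧ e 1 ∈ t ∧ e 0 ∉ t then funVal h (dec t)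
      else funVal g t
      with hFdef
    refine ⟨graphOf F (FinSubsets X), isAlgebraOn_graphOf ?_, ?_⟩
    · intro t ht
      simp only [hFdef]
      split_ifs with h1 h2 h3
      · exact he _
      · exact hg.2 _ _ (funVal_mem hg.1 (dec_fin ht))
      · exact hh.2 _ _ (funVal_mem hh.1 (dec_fin ht))
      · exact hg.2 _ _ (funVal_mem hg.1 ht)
    · intro z hz
      have stepA : ∀ n, e n ∈ z := by
        intro n
        induction n using Nat.strong_induction_on with
        | _ n IH =>
          have hseg_sub : eSet (Set.Iio n) ⊆ z := by
            intro x hx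
            obtain ⟨i, hi, rfl⟩ := mem_eSet.1 hx
            exact IH i (Set.mem_Iio.1 hi)
          have hseg_fin : eSet (Set.Iio n) ∈ FinSubsets X :=
            mem_finSubsets.2 ⟨eSet_subX _, toSet_eSet_fin (Set.finite_Iio n)⟩
          have hFt := closedUnder_graphOf_apply hz hseg_fin hseg_sub
          have h1 : ∃ m, eSet (Set.Iio n) = eSet (Set.Iio m) := ⟨n, rfl⟩
          simp only [hFdef, dif_pos h1] at hFt
          rwa [← eSeg_inj (Classical.choose_spec h1)] at hFt
      have build : ∀ s : ZFSet, s ∈ FinSubsets X → s ⊆ z → ∀ m : ℕ, m < 2 →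
          ∃ t : ZFSet, t ∈ FinSubsets X ∧ t ⊆ z ∧ dec t = s ∧
            e 2 ∈ t ∧ e m ∈ t ∧ e (1 - m) ∉ t ∧ ¬ ∃ n, t = eSet (Set.Iio n) := by
        intro s hs hsz m hm
        obtain ⟨hsX, hsfin⟩ := mem_finSubsets.1 hs
        set Bt : Set ℕ := {m, 2} ∪ (fun i : ℕ => i + 3) '' {i : ℕ | e i ∈ s} with hBt
        set t : ZFSet := ZFSet.sep (fun a => ¬ ∃ i, a = e i) s ∪ eSet Bt with ht_def
        have mem_t : ∀ x : ZFSet,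
            x ∈ t ↔ (x ∈ s ∧ ¬ ∃ i, x = e i) ∨ ∃ j ∈ Bt, x = e j := by
          intro x
          simp only [ht_def, ZFSet.mem_union, ZFSet.mem_sep, mem_eSet]
        have hmem_e : ∀ j : ℕ, e j ∈ t ↔ j ∈ Bt := by
          intro j
          rw [mem_t]
          constructor
          · rintro (⟨-, hno⟩ | ⟨j', hj', hje⟩)
            · exact absurd ⟨j, rfl⟩ hno
            · rwa [einj hje]
          · intro hj; exact Or.inr ⟨j, hj, rfl⟩
        have hBt_iff : ∀ j : ℕ, j ∈ Bt ↔ (j = m ∨ j = 2 ∨ ∃ i, e i ∈ s ∧ i + 3 = j) := by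
          intro j
          simp only [hBt, Set.mem_union, Set.mem_insert_iff, Set.mem_singleton_iff,
            Set.mem_image, Set.mem_setOf_eq]
          tauto
        have h2Bt : (2 : ℕ) ∈ Bt := (hBt_iff 2).2 (Or.inr (Or.inl rfl))
        have hmBt : m ∈ Bt := (hBt_iff m).2 (Or.inl rfl)
        have h1mBt : (1 - m) ∉ Bt := by
          intro hc
          rcases (hBt_iff (1 - m)).1 hc with hc1 | hc2 | ⟨i, -, hc3⟩ <;> omega
        have ht_subX : t ⊆ X := by
          intro x hx
          rcases (mem_t x).1 hx with ⟨hxs, -⟩ | ⟨j, -, rfl⟩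
          · exact hsX hxs
          · exact he j
        have hBt_fin : Bt.Finite := by
          refine ((Set.finite_singleton 2).insert m).union ?_
          refine Set.Finite.image _ ?_
          have heq : {i : ℕ | e i ∈ s} = e ⁻¹' s.toSet := rfl
          rw [heq]
          exact Set.Finite.preimage einj.injOn hsfin
        have ht_fin : t.toSet.Finite := by
          refine (hsfin.union (toSet_eSet_fin hBt_fin)).subset ?_
          intro x hx
          rcases (mem_t x).1 hx with ⟨hxs, -⟩ | ⟨j, hj, rfl⟩
          · exact Or.inl hxs
          · exact Or.inr (mem_eSet.2 ⟨j, hj, rfl⟩)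
        have ht_z : t ⊆ z := by
          intro x hx
          rcases (mem_t x).1 hx with ⟨hxs, -⟩ | ⟨j, -, rfl⟩
          · exact hsz hxs
          · exact stepA j
        have hdect : dec t = s := by
          apply ZFSet.ext
          intro x
          rw [dec_mem]
          constructor
          · rintro (⟨hxt, hno⟩ | ⟨i, hi3, rfl⟩)
            · rcases (mem_t x).1 hxt with ⟨hxs, -⟩ | ⟨j, -, rfl⟩
              · exact hxs
              · exact absurd ⟨j, rfl⟩ hno
            · have h3 := (hmem_e (i + 3)).1 hi3
              rcases (hBt_iff (i + 3)).1 h3 with hc1 | hc2 | ⟨i', hi', hii⟩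
              · omega
              · omega
              · have : i' = i := by omega
                exact this ▸ hi'
          · intro hxs
            by_cases hxe : ∃ i, x = e i
            · obtain ⟨i, rfl⟩ := hxe
              refine Or.inr ⟨i, ?_, rfl⟩
              exact (hmem_e (i + 3)).2 ((hBt_iff (i + 3)).2 (Or.inr (Or.inr ⟨i, hxs, rfl⟩)))
            · exact Or.inl ⟨(mem_t x).2 (Or.inl ⟨hxs, hxe⟩), hxe⟩
        have hnseg : ¬ ∃ n, t = eSet (Set.Iio n) := by
          rintro ⟨n, hn⟩
          have h2t : e 2 ∈ t := (hmem_e 2).2 h2Bt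
          rw [hn] at h2t
          obtain ⟨i, hi, hie⟩ := mem_eSet.1 h2t
          have h2i := einj hie
          have hin := Set.mem_Iio.1 hi
          have h1mt : e (1 - m) ∈ eSet (Set.Iio n) := mem_eSet.2 ⟨1 - m, Set.mem_Iio.2 (by omega), rfl⟩
          rw [← hn] at h1mt
          exact h1mBt ((hmem_e (1 - m)).1 h1mt)
        exact ⟨t, mem_finSubsets.2 ⟨ht_subX, ht_fin⟩, ht_z, hdect,
          (hmem_e 2).2 h2Bt, (hmem_e m).2 hmBt,
          fun hc => h1mBt ((hmem_e (1 - m)).1 hc), hnseg⟩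
      constructor
      · intro s b hsb hsz
        have hsX : s ∈ FinSubsets X := hg.1.2.2 s b hsb
        obtain ⟨t, htX, htz, hdect, h2t, h0t, h1t, hnseg⟩ := build s hsX hsz 0 (by omega)
        have hFt := closedUnder_graphOf_apply hz htX htz
        have h1t' : e 1 ∉ t := h1t
        simp only [hFdef, dif_neg hnseg, if_pos (⟨h2t, h0t, h1t'⟩ :
          e 2 ∈ t ∧ e 0 ∈ t ∧ e 1 ∉ t)] at hFt
        rw [hdect] at hFt
        rwa [funVal_unique hg.1 hsX hsb]
      · intro s b hsb hsz
        have hsX : s ∈ FinSubsets X := hh.1.2.2 s b hsb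
        obtain ⟨t, htX, htz, hdect, h2t, h1t, h0t, hnseg⟩ := build s hsX hsz 1 (by omega)
        have h0t' : e 0 ∉ t := h0t
        have hFt := closedUnder_graphOf_apply hz htX htz
        simp only [hFdef, dif_neg hnseg,
          if_neg (fun hc : e 2 ∈ t ∧ e 0 ∈ t ∧ e 1 ∉ t => h0t' hc.2.1),
          if_pos (⟨h2t, h1t, h0t'⟩ : e 2 ∈ t ∧ e 1 ∈ t ∧ e 0 ∉ t)] at hFt
        rw [hdect] at hFt
        rwa [funVal_unique hh.1 hsX hsb]

lemma isCtble_of_no_members {A : ZFSet} (hA : ∀ x : ZFSet, x ∉ A) :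
    IsCtble V0 A := by
  refine ⟨∅, trivial, ⟨?_, ?_, ?_⟩, ?_, ?_⟩
  · intro p hp; exact absurd hp (ZFSet.notMem_empty p)
  · intro a ha; exact absurd ha (hA a)
  · intro a b hab; exact absurd hab (ZFSet.notMem_empty _)
  · intro a b hab; exact absurd hab (ZFSet.notMem_empty _)
  · intro a a' b hab _; exact absurd hab (ZFSet.notMem_empty _)

lemma isOrd_of_mem {x y : ZFSet} (hx : IsOrd x) (hyx : y ∈ x) : IsOrd y := by
  constructor
  · intro z hz w hw
    exact hx.mem_trans' hw hz hyx
  · intro a b c hab hbc hcy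
    exact hx.mem_trans' hab hbc (hx.isTransitive y hyx hcy)

lemma exists_mem_omega1 {θ : ZFSet.{u}} (hreg : IsRegular V0 θ) :
    ∃ x : ZFSet.{u}, x ∈ omega1 (V0 : VClass.{u}) := by
  have hθord : IsOrd θ := hreg.1.1
  have hθnc : ¬ IsCtble V0 θ := hreg.1.2 ZFSet.omega hreg.2.1
  have hθY : θ ∈ ZFSet.sep (fun β => ¬ IsCtble V0 β) (succZ θ) :=
    ZFSet.mem_sep.2 ⟨ZFSet.mem_insert θ θ, hθnc⟩
  have hYne : ZFSet.sep (fun β => ¬ IsCtble V0 β) (succZ θ) ≠ ∅ :=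
    fun hc => ZFSet.notMem_empty θ (hc ▸ hθY)
  obtain ⟨μ, hμY, hmin⟩ := ZFSet.regularity _ hYne
  obtain ⟨hμsucc, hμnc⟩ := ZFSet.mem_sep.1 hμY
  have hμord : IsOrd μ := by
    rcases ZFSet.mem_insert_iff.1 hμsucc with rfl | hμθ
    · exact hθord
    · exact isOrd_of_mem hθord hμθ
  have hforall : ∀ β ∈ μ, IsCtble V0 β := by
    intro β hβ
    by_contra hβnc
    have hβsucc : β ∈ succZ θ := by
      rcases ZFSet.mem_insert_iff.1 hμsucc with heq | hμθ
      · exact ZFSet.mem_insert_of_mem θ (heq ▸ hβ)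
      · exact ZFSet.mem_insert_of_mem θ (hθord.isTransitive μ hμθ hβ)
    have hβin : β ∈ ZFSet.sep (fun β => ¬ IsCtble V0 β) (succZ θ) ∩ μ :=
      ZFSet.mem_inter.2 ⟨ZFSet.mem_sep.2 ⟨hβsucc, hβnc⟩, hβ⟩
    rw [hmin] at hβin
    exact ZFSet.notMem_empty β hβin
  have hex : ∃ α : ZFSet, IsOrd α ∧ ¬ IsCtble V0 α ∧ ∀ β ∈ α, IsCtble V0 β :=
    ⟨μ, hμord, hμnc, hforall⟩
  have hspec := Classical.epsilon_spec hex
  have h1 : ¬ IsCtble V0 (omega1 V0) := hspec.2.1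
  by_contra hc
  push_neg at hc
  exact h1 (isCtble_of_no_members hc)


/-- Suppose `Γ` is a class of sets `W` with `|W| = ω₁ ⊆ W`
and `RP_Γ` holds.  Then for every regular `θ ≥ ω₂` and every stationary
`S ⊆ [H_θ]^ω` there are in fact *stationarily many* `W ∈ [H_θ]^{ω₁} ∩ Γ` (that
is: for every algebra on `H_θ` there is such a `W` closed under it) with
`S ∩ [W]^ω` stationary in `[W]^ω`. -/
theorem RP_gives_stationarily_many_reflecting_sets
    (Γ : Set ZFSet)
    (hΓ : ∀ W ∈ Γ, omega1 V0 ⊆ W ∧ cardEq V0 W (omega1 V0))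
    (hRP : ∀ θ : ZFSet, IsRegular V0 θ → omega2 V0 ⊆ θ →
      ∀ S : ZFSet, (∀ z ∈ S, z ⊆ Hset V0 θ ∧ IsCtble V0 z) →
        StatIn V0 S.toSet (Hset V0 θ) →
        ∃ W ∈ Γ, W ⊆ Hset V0 θ ∧ StatIn V0 {z : ZFSet | z ∈ S ∧ z ⊆ W} W) :
    ∀ θ : ZFSet, IsRegular V0 θ → omega2 V0 ⊆ θ →
      ∀ S : ZFSet, (∀ z ∈ S, z ⊆ Hset V0 θ ∧ IsCtble V0 z) →
        StatIn V0 S.toSet (Hset V0 θ) →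
        ∀ g : ZFSet, IsAlgebraOn g (Hset V0 θ) →
          ∃ W ∈ Γ, W ⊆ Hset V0 θ ∧ ClosedUnder W g ∧
            StatIn V0 {z : ZFSet | z ∈ S ∧ z ⊆ W} W := by
  intro θ hreg hθ2 S hS hstat g hgalg
  classical
  have hstat2 : StatIn V0 (ZFSet.sep (fun z => ClosedUnder z g) S).toSet (Hset V0 θ) := by
    intro k _ hkalg
    obtain ⟨k', hk'alg, hk'cl⟩ := merge_algebras hgalg hkalg
    obtain ⟨z, hzS, -, hzX, hzc, hzk'⟩ := hstat k' trivial hk'alg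
    have hzS' : z ∈ S := hzS
    exact ⟨z, ZFSet.mem_sep.2 ⟨hzS', (hk'cl z hzk').1⟩, trivial, hzX, hzc,
      (hk'cl z hzk').2⟩
  obtain ⟨W, hWΓ, hWX, hWstat⟩ := hRP θ hreg hθ2 (ZFSet.sep (fun z => ClosedUnder z g) S)
    (fun z hz => hS z (ZFSet.mem_sep.1 hz).1) hstat2
  obtain ⟨hω1W, -⟩ := hΓ W hWΓ
  obtain ⟨w0, hw0⟩ := exists_mem_omega1 hreg
  have hw0W : w0 ∈ W := hω1W hw0
  have hWcl : ClosedUnder W g := by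
    intro s b hsb hsW
    have hsFin : s ∈ FinSubsets (Hset V0 θ) := hgalg.1.2.2 s b hsb
    have hsfin : s.toSet.Finite := (mem_finSubsets.1 hsFin).2
    obtain ⟨k, hkalg, hreach⟩ := reach_algebra hw0W hsW hsfin
    obtain ⟨z, hzmem, -, -, -, hzk⟩ := hWstat k trivial hkalg
    have hzg : ClosedUnder z g := (ZFSet.mem_sep.1 hzmem.1).2
    exact hzmem.2 (hzg s b hsb (hreach z hzk))
  refine ⟨W, hWΓ, hWX, hWcl, ?_⟩
  intro k hkV hkalg
  obtain ⟨z, hzmem, hzV, hzW, hzc, hzk⟩ := hWstat k hkV hkalg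
  exact ⟨z, ⟨(ZFSet.mem_sep.1 hzmem.1).1, hzmem.2⟩, hzV, hzW, hzc, hzk⟩


end

end CCPaper
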